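/- Let A be a reduced Noetherian ring such that A̅ is a finitely generated A-module, and let (J, p) be a test pair for A, i.e., J is a radical ideal of A containing the non-zerodivisor p with N(A) ⊆ V(J). Let A' be a finite extension ring of A inside Q(A) with inclusion ψ : A ↪ A'. Then (√(ψ(J)A'), ψ(p)) is a test pair for A': √(ψ(J)A') is a radical ideal of A' containing the non-zerodivisor ψ(p) on A', and N(A') ⊆ V(√(ψ(J)A')). -/

import Mathlib

set_option synthInstance.maxHeartbeats 1000000
set_option maxHeartbeats 1000000

open scoped nonZeroDivisors

/-- Being integrally closed transfers along ring isomorphisms. -/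
theorem TestPair.isIntegrallyClosed_of_ringEquiv {R S : Type*} [CommRing R] [CommRing S]
    (e : R ≃+* S) (h : IsIntegrallyClosed R) : IsIntegrallyClosed S := by
  rw [isIntegrallyClosed_iff (FractionRing S)]
  intro x hx
  let E : FractionRing R ≃+* FractionRing S := IsFractionRing.ringEquivOfRingEquiv e
  have hx' : IsIntegral R (E.symm x) := by
    refine hx.map_of_comp_eq e.symm.toRingHom E.symm.toRingHom ?_
    ext s
    simp only [RingHom.coe_comp, Function.comp_apply, RingEquiv.toRingHom_eq_coe,
      RingEquiv.coe_toRingHom]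
    have : E.symm = IsFractionRing.ringEquivOfRingEquiv e.symm :=
      IsFractionRing.ringEquivOfRingEquiv_symm e
    rw [this, IsFractionRing.ringEquivOfRingEquiv_algebraMap e.symm s]
  obtain ⟨y, hy⟩ := (isIntegrallyClosed_iff (FractionRing R)).mp h hx'
  refine ⟨e y, ?_⟩
  have h2 := congrArg E hy
  rwa [IsFractionRing.ringEquivOfRingEquiv_algebraMap e y, RingEquiv.apply_symm_apply] at h2

/-- Key claim: if `A_Q` is integrally closed and `A'` is a module-finite subalgebra of
`Q(A)`, then every element of `A'` can be "cleared" into `A` by a denominator outside `Q`. -/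
theorem TestPair.exists_clear {A : Type*} [CommRing A]
    (A' : Subalgebra A (FractionRing A)) (hA' : Module.Finite A A')
    (Q : Ideal A) [Q.IsPrime]
    (hQ : IsIntegrallyClosed (Localization.AtPrime Q))
    (x : A') :
    ∃ t ∈ Q.primeCompl, ∃ a : A, algebraMap A A' t * x = algebraMap A A' a := by
  haveI := hA'
  haveI := hQ
  set F := FractionRing A
  set T := Localization.AtPrime Q
  set K := FractionRing T with hK
  have hker : ∀ n : A, algebraMap A T n = 0 → ∃ u ∈ Q.primeCompl, u * n = 0 := by
    intro n hn
    obtain ⟨u, hu⟩ := (IsLocalization.map_eq_zero_iff Q.primeCompl T n).mp hn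
    exact ⟨u, u.2, hu⟩
  have hnzd : ∀ s : A⁰, IsUnit (algebraMap A K (s : A)) := by
    intro s
    have hT : algebraMap A T (s : A) ∈ T⁰ := by
      rw [mem_nonZeroDivisors_iff_right]
      intro y hy
      obtain ⟨⟨n, d⟩, hnd⟩ := IsLocalization.surj Q.primeCompl y
      have h1 : algebraMap A T (n * (s : A)) = 0 := by
        rw [map_mul, ← hnd, mul_assoc, mul_comm (algebraMap A T (d : A)), ← mul_assoc, hy,
          zero_mul]
      obtain ⟨u, hu, hu0⟩ := hker _ h1
      have hun : u * n = 0 := by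
        have h5 : (u * n) * (s : A) = 0 := by rw [mul_assoc]; exact hu0
        exact (mul_right_mem_nonZeroDivisors_eq_zero_iff s.2).mp h5
      have hn0 : algebraMap A T n = 0 :=
        (IsLocalization.map_eq_zero_iff Q.primeCompl T n).mpr ⟨⟨u, hu⟩, hun⟩
      have : y * algebraMap A T (d : A) = 0 := by rw [hnd, hn0]
      exact ((IsLocalization.map_units T d).mul_left_eq_zero).mp this
    rw [IsScalarTower.algebraMap_apply A T K]
    exact IsLocalization.map_units K (⟨algebraMap A T (s : A), hT⟩ : T⁰)
  let f : F →+* K := IsLocalization.lift (M := A⁰) (S := F) hnzd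
  have hf : ∀ a : A, f (algebraMap A F a) = algebraMap A K a := fun a =>
    IsLocalization.lift_eq hnzd a
  have hxi : IsIntegral A (x : F) := by
    have h1 : IsIntegral A x := IsIntegral.of_finite A x
    exact h1.map A'.val
  have hfxi : IsIntegral A (f (x : F)) := by
    refine hxi.map_of_comp_eq (RingHom.id A) f ?_
    ext a
    simp [hf]
  have hTfx : IsIntegral T (f (x : F)) := hfxi.tower_top
  obtain ⟨y, hy⟩ := IsIntegrallyClosed.isIntegral_iff.mp hTfx
  obtain ⟨⟨a, t⟩, hat⟩ := IsLocalization.surj Q.primeCompl y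
  set z : F := algebraMap A F t * (x : F) - algebraMap A F a with hz
  have hfz : f z = 0 := by
    have h1 : f z = algebraMap A K t * f (x : F) - algebraMap A K a := by
      rw [hz, map_sub, map_mul, hf, hf]
    rw [h1, ← hy, IsScalarTower.algebraMap_apply A T K (t : A),
      IsScalarTower.algebraMap_apply A T K a, ← map_mul, mul_comm, hat, sub_self]
  obtain ⟨⟨n, s⟩, hns⟩ := IsLocalization.surj A⁰ z
  have hn0 : algebraMap A T n = 0 := by
    have h2 : algebraMap A K n = 0 := by rw [← hf n, ← hns, map_mul, hfz, zero_mul]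
    have h3 : algebraMap T K (algebraMap A T n) = algebraMap T K 0 := by
      rw [map_zero, ← IsScalarTower.algebraMap_apply A T K]; exact h2
    exact IsFractionRing.injective T K h3
  obtain ⟨u, hu, hu0⟩ := hker n hn0
  have hzF : algebraMap A F u * z = 0 := by
    have hsu : IsUnit (algebraMap A F (s : A)) := IsLocalization.map_units F s
    have h3 : (algebraMap A F u * z) * algebraMap A F (s : A) = 0 := by
      rw [mul_assoc, hns, ← map_mul, hu0, map_zero]
    exact (hsu.mul_left_eq_zero).mp h3
  have hfinal : algebraMap A F (u * t) * (x : F) = algebraMap A F (u * a) := by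
    rw [hz, mul_sub] at hzF
    have h4 := sub_eq_zero.mp hzF
    rw [map_mul, map_mul, mul_assoc]
    rw [← mul_assoc, mul_assoc] at h4
    exact h4
  refine ⟨u * t, mul_mem hu t.2, u * a, ?_⟩
  apply Subtype.coe_injective
  push_cast
  rw [map_mul, map_mul] at hfinal
  exact hfinal

/-- If `A'` is a module-finite subalgebra of `Q(A)`, `P` a prime of `A'` lying over `Q`,
and `A_Q` is integrally closed, then `A'_P` is integrally closed. -/
theorem TestPair.icl_localization {A : Type*} [CommRing A]
    (A' : Subalgebra A (FractionRing A)) (hA' : Module.Finite A A')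
    (P : Ideal A') (hP : P.IsPrime)
    (hQ : IsIntegrallyClosed (Localization.AtPrime (P.comap (algebraMap A A')))) :
    IsIntegrallyClosed (@Localization.AtPrime A' _ P hP) := by
  haveI := hP
  haveI : (P.comap (algebraMap A A')).IsPrime := Ideal.IsPrime.comap _
  set Q : Ideal A := P.comap (algebraMap A A') with hQdef
  set L := Localization.AtPrime P with hL
  have hmem : ∀ t : A, t ∈ Q.primeCompl → algebraMap A A' t ∈ P.primeCompl := fun t ht hm =>
    ht (Ideal.mem_comap.mpr hm)
  have claim : ∀ x : A', ∃ t ∈ Q.primeCompl, ∃ a : A,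
      algebraMap A A' t * x = algebraMap A A' a := TestPair.exists_clear A' hA' Q hQ
  have claim2 : ∀ c : A', c ∈ P.primeCompl → ∃ b ∈ Q.primeCompl, ∃ t ∈ Q.primeCompl,
      algebraMap A A' t * c = algebraMap A A' b := by
    intro c hc
    obtain ⟨t, ht, b, hb⟩ := claim c
    refine ⟨b, ?_, t, ht, hb⟩
    intro hbQ
    have hbP : algebraMap A A' t * c ∈ P := by
      rw [hb]; exact Ideal.mem_comap.mp hbQ
    rcases hP.mem_or_mem hbP with h | h
    · exact hmem t ht h
    · exact hc h
  haveI hloc : IsLocalization Q.primeCompl L := by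
    refine ⟨fun t => ?_, fun z => ?_, fun {a b} h => ?_⟩
    · show IsUnit (algebraMap A L (t : A))
      rw [IsScalarTower.algebraMap_apply A A' L]
      exact IsLocalization.map_units (M := P.primeCompl) L ⟨_, hmem t t.2⟩
    · obtain ⟨⟨x, s⟩, hxs⟩ := IsLocalization.surj P.primeCompl z
      obtain ⟨tx, htx, ax, hax⟩ := claim x
      obtain ⟨bs, hbs, ts, hts, hbseq⟩ := claim2 s s.2
      refine ⟨⟨ax * ts, ⟨tx * bs, mul_mem htx hbs⟩⟩, ?_⟩
      show z * algebraMap A L (tx * bs) = algebraMap A L (ax * ts)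
      rw [IsScalarTower.algebraMap_apply A A' L, IsScalarTower.algebraMap_apply A A' L]
      have h1 := congrArg (algebraMap A' L) hax
      have h2 := congrArg (algebraMap A' L) hbseq
      have hgoal : z * algebraMap A' L (algebraMap A A' (tx * bs)) =
          algebraMap A' L (algebraMap A A' (ax * ts)) := by
        simp only [map_mul] at h1 h2 ⊢
        rw [← h2]
        calc z * (algebraMap A' L (algebraMap A A' tx) *
              (algebraMap A' L (algebraMap A A' ts) * algebraMap A' L (s : A'))) =
            (algebraMap A' L (algebraMap A A' tx) * (z * algebraMap A' L (s : A'))) *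
              algebraMap A' L (algebraMap A A' ts) := by ring
          _ = (algebraMap A' L (algebraMap A A' tx) * algebraMap A' L (x : A')) *
              algebraMap A' L (algebraMap A A' ts) := by rw [hxs]
          _ = algebraMap A' L (algebraMap A A' ax) * algebraMap A' L (algebraMap A A' ts) := by
              rw [h1]
      exact hgoal
    · rw [IsScalarTower.algebraMap_apply A A' L, IsScalarTower.algebraMap_apply A A' L] at h
      have h' : algebraMap A' L (algebraMap A A' a) = algebraMap A' L (algebraMap A A' b) := h
      obtain ⟨c, hc⟩ := IsLocalization.exists_of_eq (M := P.primeCompl) h'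
      obtain ⟨bc, hbc, tc, htc, hceq⟩ := claim2 (c : A') c.2
      have hinj : Function.Injective (algebraMap A A') := by
        intro a₁ a₂ hab
        apply IsFractionRing.injective A (FractionRing A)
        have := congrArg (A'.val) hab
        simpa using this
      refine ⟨⟨bc, hbc⟩, hinj ?_⟩
      simp only [map_mul]
      calc algebraMap A A' bc * algebraMap A A' a
          = (algebraMap A A' tc * (c : A')) * algebraMap A A' a := by rw [hceq]
        _ = algebraMap A A' tc * ((c : A') * algebraMap A A' a) := by ring
        _ = algebraMap A A' tc * ((c : A') * algebraMap A A' b) := by rw [hc]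
        _ = (algebraMap A A' tc * (c : A')) * algebraMap A A' b := by ring
        _ = algebraMap A A' bc * algebraMap A A' b := by rw [hceq]
  have e : Localization.AtPrime Q ≃ₐ[A] L :=
    IsLocalization.algEquiv Q.primeCompl (Localization.AtPrime Q) L
  exact TestPair.isIntegrallyClosed_of_ringEquiv e.toRingEquiv hQ

/-- If `(J, p)` is a test pair for a reduced Noetherian ring `A` with
module-finite normalization, and `A ⊆ A' ⊆ Q(A)` is a finite extension, then
`(√(ψ(J)A'), ψ(p))` is a test pair for `A'`. -/
theorem test_pair_of_extension
    (A : Type*) [CommRing A] [IsReduced A] [IsNoetherianRing A]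
    (hbar : Module.Finite A (integralClosure A (FractionRing A)))
    (J : Ideal A) (hrad : J.IsRadical)
    (p : A) (hp : p ∈ nonZeroDivisors A) (hpJ : p ∈ J)
    (hN : ∀ (P : Ideal A) (hP : P.IsPrime),
      ¬ IsIntegrallyClosed (@Localization.AtPrime _ _ P hP) → J ≤ P)
    (A' : Subalgebra A (FractionRing A)) (hA' : Module.Finite A A') :
    let J' : Ideal A' := (J.map (algebraMap A A')).radical
    J'.IsRadical ∧
    algebraMap A A' p ∈ J' ∧
    algebraMap A A' p ∈ nonZeroDivisors A' ∧
    (∀ (P : Ideal A') (hP : P.IsPrime),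
      ¬ IsIntegrallyClosed (@Localization.AtPrime _ _ P hP) → J' ≤ P) := by
  intro J'
  refine ⟨Ideal.radical_isRadical _, ?_, ?_, ?_⟩
  · exact Ideal.le_radical (Ideal.mem_map_of_mem _ hpJ)
  · rw [mem_nonZeroDivisors_iff_right]
    intro x hx
    have h1 : (x : FractionRing A) * algebraMap A (FractionRing A) p = 0 := by
      have := congrArg (A'.val) hx
      simpa using this
    have hu : IsUnit (algebraMap A (FractionRing A) p) :=
      IsLocalization.map_units (FractionRing A) (⟨p, hp⟩ : A⁰)
    have h2 : (x : FractionRing A) = 0 := (hu.mul_left_eq_zero).mp h1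
    exact Subtype.coe_injective (by simpa using h2)
  · intro P hP hnc
    haveI := hP
    haveI : (P.comap (algebraMap A A')).IsPrime := Ideal.IsPrime.comap _
    have hQn : ¬ IsIntegrallyClosed (Localization.AtPrime (P.comap (algebraMap A A'))) :=
      fun h => hnc (TestPair.icl_localization A' hA' P hP h)
    have hJQ : J ≤ P.comap (algebraMap A A') := hN _ _ hQn
    have h1 : J.map (algebraMap A A') ≤ P := Ideal.map_le_iff_le_comap.mpr hJQ
    calc (J.map (algebraMap A A')).radical ≤ P.radical := Ideal.radical_mono h1
      _ = P := hP.radical
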